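/- Let k be a field, M a finite-dimensional k-vector space, and Φ a k-linear automorphism of M ⊗ M satisfying the pentagon equation. For ω ∈ End(M)* set λ(ω) = (ω ⊗ id)(Φ), where Φ is regarded as an element of End(M) ⊗ End(M). Then: (a) for every ω ∈ End(M)* with λ(ω) = 0 one also has (ω ⊗ id)(Φ⁻¹) = 0 (so S(λ(ω)) := (ω ⊗ id)(Φ⁻¹) is a well-defined map on the image of λ); (b) with c : End(M) ⊗ End(M) → End(M) the composition map a ⊗ b ↦ a ∘ b, for every ω ∈ End(M)* one has c((ω ⊗ id ⊗ id)(Φ_{12} ∘ Φ_{13}⁻¹)) = ω(id_M) · id_M and c((ω ⊗ id ⊗ id)(Φ_{12}⁻¹ ∘ Φ_{13})) = ω(id_M) · id_M (these are the two antipode identities for S). -/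

import Mathlib

open TensorProduct

noncomputable section

variable {k : Type*} [Field k]

/-- Apply `G` to tensor factors 1 and 2 of a triple tensor product. -/
def m12 {A B C P Q : Type*}
    [AddCommGroup A] [AddCommGroup B] [AddCommGroup C] [AddCommGroup P] [AddCommGroup Q]
    [Module k A] [Module k B] [Module k C] [Module k P] [Module k Q]
    (G : A ⊗[k] B →ₗ[k] P ⊗[k] Q) :
    A ⊗[k] (B ⊗[k] C) →ₗ[k] P ⊗[k] (Q ⊗[k] C) :=
  (TensorProduct.assoc k P Q C).toLinearMap ∘ₗ G.rTensor C ∘ₗ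
    (TensorProduct.assoc k A B C).symm.toLinearMap

/-- Apply `G` to tensor factors 2 and 3 of a triple tensor product. -/
def m23 {A B C Q R : Type*}
    [AddCommGroup A] [AddCommGroup B] [AddCommGroup C] [AddCommGroup Q] [AddCommGroup R]
    [Module k A] [Module k B] [Module k C] [Module k Q] [Module k R]
    (G : B ⊗[k] C →ₗ[k] Q ⊗[k] R) :
    A ⊗[k] (B ⊗[k] C) →ₗ[k] A ⊗[k] (Q ⊗[k] R) :=
  G.lTensor A

/-- Apply `G` to tensor factors 1 and 3 of a triple tensor product. -/
def m13 {A B C P R : Type*}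
    [AddCommGroup A] [AddCommGroup B] [AddCommGroup C] [AddCommGroup P] [AddCommGroup R]
    [Module k A] [Module k B] [Module k C] [Module k P] [Module k R]
    (G : A ⊗[k] C →ₗ[k] P ⊗[k] R) :
    A ⊗[k] (B ⊗[k] C) →ₗ[k] P ⊗[k] (B ⊗[k] R) :=
  ((TensorProduct.comm k R B).toLinearMap.lTensor P) ∘ₗ
    (TensorProduct.assoc k P R B).toLinearMap ∘ₗ G.rTensor B ∘ₗ
    (TensorProduct.assoc k A C B).symm.toLinearMap ∘ₗ
    ((TensorProduct.comm k B C).toLinearMap.lTensor A)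

/-- The modified pentagon equation for a pair `(F, Φ)`:
`F₁₂ ∘ F₁₃ ∘ Φ₂₃ = F₂₃ ∘ F₁₂` as maps `V ⊗ M ⊗ M → V ⊗ V ⊗ V`. -/
def MPE {V M : Type*} [AddCommGroup V] [AddCommGroup M] [Module k V] [Module k M]
    (F : V ⊗[k] M →ₗ[k] V ⊗[k] V) (Φ : M ⊗[k] M →ₗ[k] M ⊗[k] M) : Prop :=
  m12 F ∘ₗ m13 F ∘ₗ m23 Φ = m23 F ∘ₗ m12 F

/-- The pentagon equation: `Φ₁₂ ∘ Φ₁₃ ∘ Φ₂₃ = Φ₂₃ ∘ Φ₁₂` on `M ⊗ M ⊗ M`. -/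
def PE {M : Type*} [AddCommGroup M] [Module k M]
    (Φ : M ⊗[k] M →ₗ[k] M ⊗[k] M) : Prop :=
  m12 Φ ∘ₗ m13 Φ ∘ₗ m23 Φ = m23 Φ ∘ₗ m12 Φ

section PentagonEnd

variable {M : Type*} [AddCommGroup M] [Module k M] [FiniteDimensional k M]

/-- The canonical identification `End(M) ⊗ End(M) ≃ End(M ⊗ M)`. -/
noncomputable def e2 (M : Type*) [AddCommGroup M] [Module k M] [FiniteDimensional k M] :
    (Module.End k M) ⊗[k] (Module.End k M) ≃ₗ[k] Module.End k (M ⊗[k] M) :=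
  homTensorHomEquiv k M M M M

/-- The canonical identification `End(M) ⊗ (End(M) ⊗ End(M)) ≃ End(M ⊗ (M ⊗ M))`. -/
noncomputable def e3 (M : Type*) [AddCommGroup M] [Module k M] [FiniteDimensional k M] :
    (Module.End k M) ⊗[k] ((Module.End k M) ⊗[k] (Module.End k M)) ≃ₗ[k]
      Module.End k (M ⊗[k] (M ⊗[k] M)) :=
  TensorProduct.congr (LinearEquiv.refl k (Module.End k M)) (e2 M) ≪≫ₗ
    homTensorHomEquiv k M (M ⊗[k] M) M (M ⊗[k] M)

variable (Φ : M ⊗[k] M ≃ₗ[k] M ⊗[k] M)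

/-- `λ(ω) = (ω ⊗ id)(Φ)`, where `Φ` is regarded as an element of `End(M) ⊗ End(M)`. -/
noncomputable def lam (ω : Module.Dual k (Module.End k M)) : Module.End k M :=
  TensorProduct.lid k (Module.End k M)
    (TensorProduct.map ω LinearMap.id ((e2 M).symm Φ.toLinearMap))

/-- `ρ(ω) = (id ⊗ ω)(Φ)`, where `Φ` is regarded as an element of `End(M) ⊗ End(M)`. -/
noncomputable def rho (ω : Module.Dual k (Module.End k M)) : Module.End k M :=
  TensorProduct.rid k (Module.End k M)
    (TensorProduct.map LinearMap.id ω ((e2 M).symm Φ.toLinearMap))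

/-- The comultiplication `Δ_l(x) = Φ ∘ (x ⊗ id_M) ∘ Φ⁻¹`, as a linear map
`End(M) → End(M ⊗ M)`. -/
noncomputable def deltaL : Module.End k M →ₗ[k] Module.End k (M ⊗[k] M) :=
  (LinearEquiv.conj Φ).toLinearMap ∘ₗ
    LinearMap.rTensorHom (R := k) (N := M) (P := M) M

/-- The comultiplication `Δ_r(x) = Φ⁻¹ ∘ (id_M ⊗ x) ∘ Φ`, as a linear map
`End(M) → End(M ⊗ M)`. -/
noncomputable def deltaR : Module.End k M →ₗ[k] Module.End k (M ⊗[k] M) :=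
  (LinearEquiv.conj Φ.symm).toLinearMap ∘ₗ
    LinearMap.lTensorHom (R := k) (N := M) (P := M) M

/-- The product `ω *_r ω' = (ω ⊗ ω') ∘ Δ_r` on `End(M)*`. -/
noncomputable def dualMulR (ω ω' : Module.Dual k (Module.End k M)) :
    Module.Dual k (Module.End k M) :=
  (TensorProduct.lid k k).toLinearMap ∘ₗ TensorProduct.map ω ω' ∘ₗ
    (e2 M).symm.toLinearMap ∘ₗ deltaR Φ

/-- The product `ω *_l ω' = (ω ⊗ ω') ∘ Δ_l` on `End(M)*`. -/
noncomputable def dualMulL (ω ω' : Module.Dual k (Module.End k M)) :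
    Module.Dual k (Module.End k M) :=
  (TensorProduct.lid k k).toLinearMap ∘ₗ TensorProduct.map ω ω' ∘ₗ
    (e2 M).symm.toLinearMap ∘ₗ deltaL Φ

end PentagonEnd

section StmtAux

variable {M : Type*} [AddCommGroup M] [Module k M] [FiniteDimensional k M]

local notation "𝔸" => Module.End k M

set_option linter.unusedSectionVars false
set_option synthInstance.maxHeartbeats 1000000
set_option maxSynthPendingDepth 3
set_option maxHeartbeats 1600000

/-- `x ⊗ y ↦ x ⊗ (y ⊗ 1)`. -/
noncomputable def j12e : 𝔸 ⊗[k] 𝔸 →ₗ[k] 𝔸 ⊗[k] (𝔸 ⊗[k] 𝔸) :=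
  LinearMap.lTensor 𝔸 ((TensorProduct.mk k 𝔸 𝔸).flip 1)

/-- `x ⊗ y ↦ x ⊗ (1 ⊗ y)`. -/
noncomputable def j13e : 𝔸 ⊗[k] 𝔸 →ₗ[k] 𝔸 ⊗[k] (𝔸 ⊗[k] 𝔸) :=
  LinearMap.lTensor 𝔸 (TensorProduct.mk k 𝔸 𝔸 1)

/-- `y ↦ 1 ⊗ y`. -/
noncomputable def j23e : 𝔸 ⊗[k] 𝔸 →ₗ[k] 𝔸 ⊗[k] (𝔸 ⊗[k] 𝔸) :=
  TensorProduct.mk k 𝔸 (𝔸 ⊗[k] 𝔸) 1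

@[simp] lemma j12e_tmul (a b : 𝔸) : j12e (a ⊗ₜ[k] b) = a ⊗ₜ[k] (b ⊗ₜ[k] 1) := rfl
@[simp] lemma j13e_tmul (a b : 𝔸) : j13e (a ⊗ₜ[k] b) = a ⊗ₜ[k] ((1 : 𝔸) ⊗ₜ[k] b) := rfl
@[simp] lemma j23e_apply (y : 𝔸 ⊗[k] 𝔸) : j23e y = (1 : 𝔸) ⊗ₜ[k] y := rfl

@[simp] lemma e2_tmul (f g : 𝔸) : e2 M (f ⊗ₜ[k] g) = TensorProduct.map f g := by
  simp [e2, homTensorHomEquiv_apply]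

@[simp] lemma e3_tmul (f g h : 𝔸) :
    e3 M (f ⊗ₜ[k] (g ⊗ₜ[k] h)) = TensorProduct.map f (TensorProduct.map g h) := by
  simp [e3, homTensorHomEquiv_apply]

lemma e2_one : e2 M 1 = (LinearMap.id : Module.End k (M ⊗[k] M)) := by
  have h : (1 : 𝔸 ⊗[k] 𝔸) = (1 : 𝔸) ⊗ₜ[k] (1 : 𝔸) := rfl
  rw [h, e2_tmul]
  exact TensorProduct.map_id

lemma e2_mul (x y : 𝔸 ⊗[k] 𝔸) : e2 M (x * y) = e2 M x ∘ₗ e2 M y := by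
  induction x using TensorProduct.induction_on with
  | zero => simp
  | add x x' hx hx' => simp [add_mul, hx, hx', LinearMap.add_comp]
  | tmul a b =>
    induction y using TensorProduct.induction_on with
    | zero => simp
    | add y y' hy hy' => simp [mul_add, hy, hy', LinearMap.comp_add]
    | tmul c d =>
      simp only [Algebra.TensorProduct.tmul_mul_tmul, e2_tmul, Module.End.mul_eq_comp]
      exact TensorProduct.map_comp a b c d

@[simp] lemma e3_tmul2 (f : 𝔸) (z : 𝔸 ⊗[k] 𝔸) :
    e3 M (f ⊗ₜ[k] z) = TensorProduct.map f (e2 M z) := by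
  simp [e3, homTensorHomEquiv_apply]

lemma e3_mul (x y : 𝔸 ⊗[k] (𝔸 ⊗[k] 𝔸)) : e3 M (x * y) = e3 M x ∘ₗ e3 M y := by
  induction x using TensorProduct.induction_on with
  | zero => simp
  | add x x' hx hx' => simp [add_mul, hx, hx', LinearMap.add_comp]
  | tmul a b =>
    induction y using TensorProduct.induction_on with
    | zero => simp
    | add y y' hy hy' => simp [mul_add, hy, hy', LinearMap.comp_add]
    | tmul c d =>
      rw [Algebra.TensorProduct.tmul_mul_tmul, e3_tmul2, e3_tmul2, e3_tmul2,
        e2_mul, Module.End.mul_eq_comp]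
      exact TensorProduct.map_comp a _ c _

lemma e3_j12 (x : 𝔸 ⊗[k] 𝔸) : e3 M (j12e x) = m12 (e2 M x) := by
  induction x using TensorProduct.induction_on with
  | zero =>
    simp only [map_zero]
    ext m n p
    simp [m12]
  | add x x' hx hx' =>
    simp only [map_add, hx, hx']
    ext m n p
    simp [m12]
  | tmul f g =>
    ext m n p
    simp [m12, Module.End.one_eq_id]

lemma e3_j13 (x : 𝔸 ⊗[k] 𝔸) : e3 M (j13e x) = m13 (e2 M x) := by
  induction x using TensorProduct.induction_on with
  | zero =>
    simp only [map_zero]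
    ext m n p
    simp [m13]
  | add x x' hx hx' =>
    simp only [map_add, hx, hx']
    ext m n p
    simp [m13]
  | tmul f g =>
    ext m n p
    simp [m13, Module.End.one_eq_id]

lemma e3_j23 (x : 𝔸 ⊗[k] 𝔸) : e3 M (j23e x) = m23 (e2 M x) := by
  induction x using TensorProduct.induction_on with
  | zero =>
    simp only [map_zero]
    ext m n p
    simp [m23]
  | add x x' hx hx' =>
    simp only [map_add, hx, hx']
    ext m n p
    simp [m23]
  | tmul f g =>
    ext m n p
    simp [m23, Module.End.one_eq_id]

lemma j23e_mul (x y : 𝔸 ⊗[k] 𝔸) : j23e x * j23e y = j23e (x * y) := by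
  simp [Algebra.TensorProduct.tmul_mul_tmul]

/-- the right slice `a ⊗ b ↦ χ(b) • a`. -/
noncomputable def rsl (χ : Module.Dual k 𝔸) : 𝔸 ⊗[k] 𝔸 →ₗ[k] 𝔸 :=
  (TensorProduct.rid k 𝔸).toLinearMap ∘ₗ TensorProduct.map LinearMap.id χ

@[simp] lemma rsl_tmul (χ : Module.Dual k 𝔸) (a b : 𝔸) :
    rsl χ (a ⊗ₜ[k] b) = χ b • a := by
  simp [rsl, TensorProduct.smul_tmul']

/-- the contraction of the last two factors by a pair of functionals. -/
noncomputable def s2 (χ η : Module.Dual k 𝔸) : 𝔸 ⊗[k] 𝔸 →ₗ[k] k :=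
  (TensorProduct.lid k k).toLinearMap ∘ₗ TensorProduct.map χ η

@[simp] lemma s2_tmul (χ η : Module.Dual k 𝔸) (a b : 𝔸) :
    s2 χ η (a ⊗ₜ[k] b) = χ a * η b := by
  simp [s2, smul_eq_mul]

noncomputable def S23 (χ η : Module.Dual k 𝔸) : 𝔸 ⊗[k] (𝔸 ⊗[k] 𝔸) →ₗ[k] 𝔸 :=
  (TensorProduct.rid k 𝔸).toLinearMap ∘ₗ TensorProduct.map LinearMap.id (s2 χ η)

@[simp] lemma S23_tmul (χ η : Module.Dual k 𝔸) (a : 𝔸) (y : 𝔸 ⊗[k] 𝔸) :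
    S23 χ η (a ⊗ₜ[k] y) = s2 χ η y • a := by
  simp [S23, TensorProduct.smul_tmul']

lemma S23_j12_j13 (χ η : Module.Dual k 𝔸) (x y : 𝔸 ⊗[k] 𝔸) :
    S23 χ η (j12e x * j13e y) = rsl χ x * rsl η y := by
  induction x using TensorProduct.induction_on with
  | zero => simp
  | add x x' hx hx' => simp [add_mul, hx, hx']
  | tmul a b =>
    induction y using TensorProduct.induction_on with
    | zero => simp
    | add y y' hy hy' =>
      rw [map_add, mul_add, map_add, map_add, hy, hy', mul_add]
    | tmul c d =>
      simp [Algebra.TensorProduct.tmul_mul_tmul, smul_smul, smul_mul_smul_comm,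
        mul_comm (χ b) (η d)]

lemma S23_j23_j12_j23 (χ η : Module.Dual k 𝔸) (y z x : 𝔸 ⊗[k] 𝔸) :
    S23 χ η (j23e y * j12e x * j23e z) =
      rsl (s2 χ η ∘ₗ LinearMap.mulRight k z ∘ₗ LinearMap.mulLeft k y ∘ₗ
        (TensorProduct.mk k 𝔸 𝔸).flip 1) x := by
  induction x using TensorProduct.induction_on with
  | zero => simp
  | add x x' hx hx' => simp only [map_add, mul_add, add_mul, map_add, hx, hx']
  | tmul a b =>
    simp [Algebra.TensorProduct.tmul_mul_tmul, mul_assoc]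

/-- the subspace `W ⊗ A` inside `A ⊗ A`. -/
noncomputable def tsub (W : Submodule k 𝔸) : Submodule k (𝔸 ⊗[k] 𝔸) :=
  Submodule.span k {z | ∃ w ∈ W, ∃ a : 𝔸, z = w ⊗ₜ[k] a}

lemma tsub_mono {W W' : Submodule k 𝔸} (h : W ≤ W') : tsub W ≤ tsub W' := by
  apply Submodule.span_mono
  rintro z ⟨w, hw, a, rfl⟩
  exact ⟨w, h hw, a, rfl⟩

lemma tmul_mem_tsub {W : Submodule k 𝔸} {w : 𝔸} (hw : w ∈ W) (a : 𝔸) :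
    w ⊗ₜ[k] a ∈ tsub W :=
  Submodule.subset_span ⟨w, hw, a, rfl⟩

lemma mul_mem_tsub {W B V : Submodule k 𝔸} (h : ∀ w ∈ W, ∀ b ∈ B, w * b ∈ V)
    {X Y : 𝔸 ⊗[k] 𝔸} (hX : X ∈ tsub W) (hY : Y ∈ tsub B) : X * Y ∈ tsub V := by
  induction hX using Submodule.span_induction with
  | mem x hx =>
    obtain ⟨w, hw, a, rfl⟩ := hx
    induction hY using Submodule.span_induction with
    | mem y hy =>
      obtain ⟨b, hb, c, rfl⟩ := hy
      rw [Algebra.TensorProduct.tmul_mul_tmul]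
      exact tmul_mem_tsub (h w hw b hb) _
    | zero => simp only [mul_zero]; exact Submodule.zero_mem _
    | add y y' _ _ hy hy' => rw [mul_add]; exact Submodule.add_mem _ hy hy'
    | smul c y _ hy => rw [mul_smul_comm]; exact Submodule.smul_mem _ _ hy
  | zero => simp only [zero_mul]; exact Submodule.zero_mem _
  | add x x' _ _ hx hx' => rw [add_mul]; exact Submodule.add_mem _ hx hx'
  | smul c x _ hx => rw [smul_mul_assoc]; exact Submodule.smul_mem _ _ hx

lemma rsl_mem_of_mem_tsub {W : Submodule k 𝔸} {X : 𝔸 ⊗[k] 𝔸} (hX : X ∈ tsub W)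
    (χ : Module.Dual k 𝔸) : rsl χ X ∈ W := by
  induction hX using Submodule.span_induction with
  | mem x hx =>
    obtain ⟨w, hw, a, rfl⟩ := hx
    rw [rsl_tmul]
    exact Submodule.smul_mem _ _ hw
  | zero => simp
  | add x x' _ _ hx hx' => rw [map_add]; exact Submodule.add_mem _ hx hx'
  | smul c x _ hx => rw [map_smul]; exact Submodule.smul_mem _ _ hx

lemma lsl_eq_zero_of_mem_tsub {W : Submodule k 𝔸} {X : 𝔸 ⊗[k] 𝔸} (hX : X ∈ tsub W)
    (ω : Module.Dual k 𝔸) (hω : ∀ w ∈ W, ω w = 0) :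
    TensorProduct.lid k 𝔸 (TensorProduct.map ω LinearMap.id X) = 0 := by
  induction hX using Submodule.span_induction with
  | mem x hx =>
    obtain ⟨w, hw, a, rfl⟩ := hx
    simp [hω w hw]
  | zero => simp
  | add x x' _ _ hx hx' => rw [map_add, map_add, hx, hx', add_zero]
  | smul c x _ hx => rw [map_smul, map_smul, hx, smul_zero]

lemma expand_right (X : 𝔸 ⊗[k] 𝔸) :
    X = ∑ j, rsl ((Module.finBasis k 𝔸).coord j) X ⊗ₜ[k] (Module.finBasis k 𝔸) j := by
  induction X using TensorProduct.induction_on with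
  | zero => simp
  | add x x' hx hx' =>
    conv_lhs => rw [hx, hx']
    rw [← Finset.sum_add_distrib]
    exact Finset.sum_congr rfl fun j _ => by rw [map_add, TensorProduct.add_tmul]
  | tmul a c =>
    have h := (Module.finBasis k 𝔸).sum_repr c
    calc a ⊗ₜ[k] c
        = a ⊗ₜ[k] (∑ j, (Module.finBasis k 𝔸).repr c j • (Module.finBasis k 𝔸) j) := by rw [h]
      _ = ∑ j, rsl ((Module.finBasis k 𝔸).coord j) (a ⊗ₜ[k] c) ⊗ₜ[k] (Module.finBasis k 𝔸) j := by
          rw [TensorProduct.tmul_sum]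
          exact Finset.sum_congr rfl fun j _ => by
            rw [rsl_tmul, Module.Basis.coord_apply, ← TensorProduct.smul_tmul]

lemma mem_tsub_self (X : 𝔸 ⊗[k] 𝔸) {W : Submodule k 𝔸}
    (h : ∀ χ : Module.Dual k 𝔸, rsl χ X ∈ W) : X ∈ tsub W := by
  rw [expand_right X]
  exact Submodule.sum_mem _ fun j _ => tmul_mem_tsub (h _) _


lemma key23 (x y : 𝔸 ⊗[k] 𝔸) :
    LinearMap.lTensor 𝔸 (LinearMap.mul' k 𝔸) (j12e x * j13e y) = x * y := by
  induction x using TensorProduct.induction_on with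
  | zero => rw [map_zero, zero_mul, map_zero, zero_mul]
  | add x x' hx hx' => rw [map_add, add_mul, map_add, hx, hx', add_mul]
  | tmul a b =>
    induction y using TensorProduct.induction_on with
    | zero => rw [map_zero, mul_zero, map_zero, mul_zero]
    | add y y' hy hy' => rw [map_add, mul_add, map_add, hy, hy', mul_add]
    | tmul c d =>
      rw [j12e_tmul, j13e_tmul, Algebra.TensorProduct.tmul_mul_tmul,
        Algebra.TensorProduct.tmul_mul_tmul, mul_one, one_mul]
      simp [Algebra.TensorProduct.tmul_mul_tmul]

lemma exch (ω : Module.Dual k 𝔸) (X : 𝔸 ⊗[k] (𝔸 ⊗[k] 𝔸)) :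
    LinearMap.mul' k 𝔸 (TensorProduct.lid k (𝔸 ⊗[k] 𝔸)
        (TensorProduct.map ω LinearMap.id X)) =
      TensorProduct.lid k 𝔸 (TensorProduct.map ω LinearMap.id
        (LinearMap.lTensor 𝔸 (LinearMap.mul' k 𝔸) X)) := by
  induction X using TensorProduct.induction_on with
  | zero => simp
  | add X X' hX hX' => simp only [map_add, hX, hX']
  | tmul a y => simp

lemma u_mul_v (Φ : M ⊗[k] M ≃ₗ[k] M ⊗[k] M) :
    (e2 M).symm Φ.toLinearMap * (e2 M).symm Φ.symm.toLinearMap = 1 := by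
  apply (e2 M).injective
  rw [e2_mul, e2_one, LinearEquiv.apply_symm_apply, LinearEquiv.apply_symm_apply]
  ext z
  simp

lemma v_mul_u (Φ : M ⊗[k] M ≃ₗ[k] M ⊗[k] M) :
    (e2 M).symm Φ.symm.toLinearMap * (e2 M).symm Φ.toLinearMap = 1 := by
  apply (e2 M).injective
  rw [e2_mul, e2_one, LinearEquiv.apply_symm_apply, LinearEquiv.apply_symm_apply]
  ext z
  simp

lemma antipode_gen (x y : 𝔸 ⊗[k] 𝔸) (hxy : x * y = 1) (ω : Module.Dual k 𝔸) :
    LinearMap.mul' k 𝔸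
      (TensorProduct.lid k (𝔸 ⊗[k] 𝔸)
        (TensorProduct.map ω LinearMap.id
          ((e3 M).symm (m12 (e2 M x) ∘ₗ m13 (e2 M y))))) =
      ω LinearMap.id • LinearMap.id := by
  have h1 : (e3 M).symm (m12 (e2 M x) ∘ₗ m13 (e2 M y)) = j12e x * j13e y := by
    rw [LinearEquiv.symm_apply_eq, e3_mul, e3_j12, e3_j13]
  rw [h1, exch ω, key23, hxy]
  have h2 : (1 : 𝔸 ⊗[k] 𝔸) = (1 : 𝔸) ⊗ₜ[k] (1 : 𝔸) := rfl
  rw [h2]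
  simp [Module.End.one_eq_id]

lemma dual_rsl (ω χ : Module.Dual k 𝔸) (X : 𝔸 ⊗[k] 𝔸) :
    ω (rsl χ X) =
      χ (TensorProduct.lid k 𝔸 (TensorProduct.map ω LinearMap.id X)) := by
  induction X using TensorProduct.induction_on with
  | zero => simp
  | add X X' hX hX' => simp only [map_add, hX, hX']
  | tmul a c => simp [mul_comm]

lemma parta (Φ : M ⊗[k] M ≃ₗ[k] M ⊗[k] M) (hPE : PE Φ.toLinearMap)
    (ω : Module.Dual k 𝔸) (hω : lam Φ ω = 0) :
    TensorProduct.lid k 𝔸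
      (TensorProduct.map ω LinearMap.id ((e2 M).symm Φ.symm.toLinearMap)) = 0 := by
  set u : 𝔸 ⊗[k] 𝔸 := (e2 M).symm Φ.toLinearMap with hu
  set v : 𝔸 ⊗[k] 𝔸 := (e2 M).symm Φ.symm.toLinearMap with hv
  have huv : u * v = 1 := u_mul_v Φ
  have hvu : v * u = 1 := v_mul_u Φ
  -- pentagon in element form
  have hP : j12e u * j13e u * j23e u = j23e u * j12e u := by
    apply (e3 M).injective
    rw [e3_mul, e3_mul, e3_mul, e3_j12, e3_j13, e3_j23, hu,
      LinearEquiv.apply_symm_apply, LinearMap.comp_assoc]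
    exact hPE
  have h231 : j23e u * j23e v = 1 := by
    rw [j23e_mul, huv]
    rfl
  have hP2 : j12e u * j13e u = j23e u * j12e u * j23e v := by
    calc j12e u * j13e u = j12e u * j13e u * (j23e u * j23e v) := by rw [h231, mul_one]
      _ = j12e u * j13e u * j23e u * j23e v := by rw [mul_assoc (j12e u * j13e u)]
      _ = j23e u * j12e u * j23e v := by rw [hP]
  -- the subspace of left legs of u
  set W : Submodule k 𝔸 :=
    Submodule.span k (Set.range fun χ : Module.Dual k 𝔸 => rsl χ u) with hW
  have hWgen : ∀ χ : Module.Dual k 𝔸, rsl χ u ∈ W :=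
    fun χ => Submodule.subset_span ⟨χ, rfl⟩
  have hgenmul : ∀ χ η : Module.Dual k 𝔸, rsl χ u * rsl η u ∈ W := by
    intro χ η
    rw [← S23_j12_j13, hP2, S23_j23_j12_j23]
    exact hWgen _
  have hWW : ∀ w ∈ W, ∀ w' ∈ W, w * w' ∈ W := by
    intro w hw
    induction hw using Submodule.span_induction with
    | mem x hx =>
      intro w' hw'
      induction hw' using Submodule.span_induction with
      | mem y hy =>
        obtain ⟨χ, rfl⟩ := hx
        obtain ⟨η, rfl⟩ := hy
        exact hgenmul χ η
      | zero => rw [mul_zero]; exact Submodule.zero_mem _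
      | add y y' _ _ h1 h2 => rw [mul_add]; exact Submodule.add_mem _ h1 h2
      | smul c y _ h1 => rw [mul_smul_comm]; exact Submodule.smul_mem _ _ h1
    | zero => intro w' _; rw [zero_mul]; exact Submodule.zero_mem _
    | add x x' _ _ h1 h2 =>
      intro w' hw'
      rw [add_mul]; exact Submodule.add_mem _ (h1 w' hw') (h2 w' hw')
    | smul c x _ h1 =>
      intro w' hw'
      rw [smul_mul_assoc]; exact Submodule.smul_mem _ _ (h1 w' hw')
  have hωW : ∀ w ∈ W, ω w = 0 := by
    intro w hw
    induction hw using Submodule.span_induction with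
    | mem x hx =>
      obtain ⟨χ, rfl⟩ := hx
      rw [dual_rsl ω χ u]
      have : TensorProduct.lid k 𝔸 (TensorProduct.map ω LinearMap.id u) = lam Φ ω := rfl
      rw [this, hω, map_zero]
    | zero => exact map_zero ω
    | add x x' _ _ h1 h2 => rw [map_add, h1, h2, add_zero]
    | smul c x _ h1 => rw [map_smul, h1, smul_zero]
  have hu_mem : u ∈ tsub W := mem_tsub_self u hWgen
  set B : Submodule k 𝔸 := W ⊔ Submodule.span k {1} with hB
  have hmemB : ∀ x ∈ B, ∃ w ∈ W, ∃ c : k, x = w + c • 1 := by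
    intro x hx
    rw [hB, Submodule.mem_sup] at hx
    obtain ⟨w, hw, z, hz, rfl⟩ := hx
    obtain ⟨c, rfl⟩ := Submodule.mem_span_singleton.mp hz
    exact ⟨w, hw, c, rfl⟩
  have hWB : ∀ w ∈ W, ∀ b ∈ B, w * b ∈ W := by
    intro w hw b hb
    obtain ⟨w', hw', c, rfl⟩ := hmemB b hb
    rw [mul_add, mul_smul_comm, mul_one]
    exact Submodule.add_mem _ (hWW w hw w' hw') (Submodule.smul_mem _ _ hw)
  have hBB : ∀ x ∈ B, ∀ y ∈ B, x * y ∈ B := by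
    intro x hx y hy
    obtain ⟨w, hw, c, rfl⟩ := hmemB x hx
    obtain ⟨w', hw', c', rfl⟩ := hmemB y hy
    have hWleB : W ≤ B := le_sup_left
    have h1 : (1 : 𝔸) ∈ B :=
      le_sup_right (α := Submodule k 𝔸) (Submodule.mem_span_singleton_self 1)
    have hxy : (w + c • 1) * (w' + c' • (1 : 𝔸)) =
        (w * w' + c' • w + c • w') + (c * c') • (1 : 𝔸) := by
      rw [add_mul, mul_add, mul_add, smul_mul_assoc, smul_mul_assoc, one_mul, one_mul,
        mul_smul_comm, mul_one, smul_smul]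
      abel
    rw [hxy]
    refine Submodule.add_mem _ (Submodule.add_mem _ (Submodule.add_mem _ ?_ ?_) ?_) ?_
    · exact hWleB (hWW w hw w' hw')
    · exact Submodule.smul_mem _ _ (hWleB hw)
    · exact Submodule.smul_mem _ _ (hWleB hw')
    · exact Submodule.smul_mem _ _ h1
  have h1B : (1 : 𝔸 ⊗[k] 𝔸) ∈ tsub B := by
    have h1 : (1 : 𝔸) ∈ B :=
      le_sup_right (α := Submodule k 𝔸) (Submodule.mem_span_singleton_self 1)
    have : ((1 : 𝔸) ⊗ₜ[k] (1 : 𝔸)) ∈ tsub B := tmul_mem_tsub h1 1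
    exact this
  have hu_memB : u ∈ tsub B := tsub_mono le_sup_left hu_mem
  -- v lies in tsub B by finite-dimensionality
  have hv_memB : v ∈ tsub B := by
    have hstab : ∀ x ∈ tsub B, (LinearMap.mulLeft k u) x ∈ tsub B := by
      intro x hx
      have : u * x ∈ tsub B := mul_mem_tsub hBB hu_memB hx
      simpa using this
    set f : tsub B →ₗ[k] tsub B := (LinearMap.mulLeft k u).restrict hstab with hf
    have hinj : Function.Injective f := by
      intro x y hxy
      have h1 : u * (x : 𝔸 ⊗[k] 𝔸) = u * (y : 𝔸 ⊗[k] 𝔸) := by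
        have := congrArg (Subtype.val) hxy
        simpa [hf, LinearMap.restrict_apply] using this
      have h2 : (x : 𝔸 ⊗[k] 𝔸) = (y : 𝔸 ⊗[k] 𝔸) := by
        calc (x : 𝔸 ⊗[k] 𝔸) = 1 * (x : 𝔸 ⊗[k] 𝔸) := (one_mul _).symm
          _ = v * (u * (x : 𝔸 ⊗[k] 𝔸)) := by rw [← hvu, mul_assoc]
          _ = v * (u * (y : 𝔸 ⊗[k] 𝔸)) := by rw [h1]
          _ = 1 * (y : 𝔸 ⊗[k] 𝔸) := by rw [← mul_assoc, hvu]
          _ = (y : 𝔸 ⊗[k] 𝔸) := one_mul _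
      exact Subtype.ext h2
    have hsurj : Function.Surjective f := LinearMap.injective_iff_surjective.mp hinj
    obtain ⟨y, hy⟩ := hsurj ⟨1, h1B⟩
    have hy1 : u * (y : 𝔸 ⊗[k] 𝔸) = 1 := by
      have := congrArg (Subtype.val) hy
      simpa [hf, LinearMap.restrict_apply] using this
    have hvy : v = (y : 𝔸 ⊗[k] 𝔸) := by
      calc v = v * (u * (y : 𝔸 ⊗[k] 𝔸)) := by rw [hy1, mul_one]
        _ = (v * u) * (y : 𝔸 ⊗[k] 𝔸) := by rw [mul_assoc]
        _ = (y : 𝔸 ⊗[k] 𝔸) := by rw [hvu, one_mul]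
    rw [hvy]
    exact y.2
  -- 1 ∈ W
  have huv_mem : (1 : 𝔸 ⊗[k] 𝔸) ∈ tsub W := by
    rw [← huv]
    exact mul_mem_tsub hWB hu_mem hv_memB
  have h1W : (1 : 𝔸) ∈ W := by
    by_cases h1 : (1 : 𝔸) = 0
    · rw [h1]; exact Submodule.zero_mem _
    · have hex : ∃ φ : Module.Dual k 𝔸, φ 1 ≠ 0 := by
        by_contra hc
        push_neg at hc
        exact h1 ((Module.forall_dual_apply_eq_zero_iff k (1 : 𝔸)).mp hc)
      obtain ⟨φ, hφ⟩ := hex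
      have hmem : rsl ((φ 1)⁻¹ • φ) (1 : 𝔸 ⊗[k] 𝔸) ∈ W :=
        rsl_mem_of_mem_tsub huv_mem _
      have hcalc : rsl ((φ 1)⁻¹ • φ) (1 : 𝔸 ⊗[k] 𝔸) = (1 : 𝔸) := by
        have h2 : (1 : 𝔸 ⊗[k] 𝔸) = (1 : 𝔸) ⊗ₜ[k] (1 : 𝔸) := rfl
        rw [h2, rsl_tmul]
        simp [inv_mul_cancel₀ hφ]
      rwa [hcalc] at hmem
  have hBW : B ≤ W := by
    rw [hB]
    exact sup_le le_rfl ((Submodule.span_singleton_le_iff_mem _ _).mpr h1W)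
  have hv_memW : v ∈ tsub W := tsub_mono hBW hv_memB
  exact lsl_eq_zero_of_mem_tsub hv_memW ω hωW

end StmtAux

/-- Let `Φ` be a solution of the pentagon equation on a finite-dimensional `M`.
(a) The assignment `S(λ(ω)) = (ω ⊗ id)(Φ⁻¹)` is well defined on the image of `λ`;
(b) the two antipode identities hold:
`c((ω ⊗ id ⊗ id)(Φ₁₂ ∘ Φ₁₃⁻¹)) = ω(id) • id = c((ω ⊗ id ⊗ id)(Φ₁₂⁻¹ ∘ Φ₁₃))`,
where `c` is the composition `End(M) ⊗ End(M) → End(M)`. -/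
theorem stmt16 {M : Type} [AddCommGroup M] [Module k M] [FiniteDimensional k M]
    (Φ : M ⊗[k] M ≃ₗ[k] M ⊗[k] M) (hPE : PE Φ.toLinearMap) :
    (∀ ω : Module.Dual k (Module.End k M), lam Φ ω = 0 →
      TensorProduct.lid k (Module.End k M)
        (TensorProduct.map ω LinearMap.id ((e2 M).symm Φ.symm.toLinearMap)) = 0) ∧
    (∀ ω : Module.Dual k (Module.End k M),
      LinearMap.mul' k (Module.End k M)
        (TensorProduct.lid k ((Module.End k M) ⊗[k] (Module.End k M))
          (TensorProduct.map ω LinearMap.id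
            ((e3 M).symm (m12 Φ.toLinearMap ∘ₗ m13 Φ.symm.toLinearMap)))) =
        ω LinearMap.id • LinearMap.id) ∧
    (∀ ω : Module.Dual k (Module.End k M),
      LinearMap.mul' k (Module.End k M)
        (TensorProduct.lid k ((Module.End k M) ⊗[k] (Module.End k M))
          (TensorProduct.map ω LinearMap.id
            ((e3 M).symm (m12 Φ.symm.toLinearMap ∘ₗ m13 Φ.toLinearMap)))) =
        ω LinearMap.id • LinearMap.id) := by
  refine ⟨fun ω hω => parta Φ hPE ω hω, fun ω => ?_, fun ω => ?_⟩
  · have h := antipode_gen ((e2 M).symm Φ.toLinearMap) ((e2 M).symm Φ.symm.toLinearMap)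
      (u_mul_v Φ) ω
    rwa [LinearEquiv.apply_symm_apply, LinearEquiv.apply_symm_apply] at h
  · have h := antipode_gen ((e2 M).symm Φ.symm.toLinearMap) ((e2 M).symm Φ.toLinearMap)
      (v_mul_u Φ) ω
    rwa [LinearEquiv.apply_symm_apply, LinearEquiv.apply_symm_apply] at h

end
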